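/- Let A = kQ/⟨P⟩ be a gentle algebra over a field k with Q connected. Then the group Inn_S^l(A) is isomorphic to the direct product (k*)^{#Q0 − 1}; moreover Inn_S^l(A) is a subgroup of S(Q1) and the quotient group S(Q1)/Inn_S^l(A) is isomorphic to (k*)^{#Q1 − #Q0 + 1} = (k*)^{c(Q)}. -/

import Mathlib

open scoped Classical

namespace GentlePaper

/-- A finite quiver. -/
structure Quiv where
  V : Type
  A : Type
  [fintV : Fintype V]
  [fintA : Fintype A]
  [decV : DecidableEq V]
  [decA : DecidableEq A]
  src : A → V
  tgt : A → V

attribute [instance] Quiv.fintV Quiv.fintA Quiv.decV Quiv.decA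

/-- A set of relations of length two: `P a b` means that the length-two path
"first `a`, then `b`" (i.e. the composition `b∘a`) belongs to `P`. -/
abbrev Rels (Q : Quiv) := Q.A → Q.A → Prop

/-- Connectedness of a quiver (as an undirected graph). -/
def Connected (Q : Quiv) : Prop :=
  Nonempty Q.V ∧ ∀ v w : Q.V, Relation.ReflTransGen
    (fun x y => ∃ a : Q.A, (Q.src a = x ∧ Q.tgt a = y) ∨ (Q.src a = y ∧ Q.tgt a = x)) v w

/-- The number of cycles `c(Q) = #Q₁ - #Q₀ + 1` of a connected quiver. -/
def cQ (Q : Quiv) : ℕ := Fintype.card Q.A + 1 - Fintype.card Q.V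

/-- The conditions for `kQ/⟨P⟩` to be a gentle algebra. -/
structure IsGentle (Q : Quiv) (P : Rels Q) : Prop where
  rel_comp : ∀ a b : Q.A, P a b → Q.tgt a = Q.src b
  src_le_two : ∀ v : Q.V, Fintype.card {a : Q.A // Q.src a = v} ≤ 2
  tgt_le_two : ∀ v : Q.V, Fintype.card {a : Q.A // Q.tgt a = v} ≤ 2
  nonrel_succ_unique : ∀ b c c' : Q.A, Q.src c = Q.tgt b → Q.src c' = Q.tgt b →
    ¬ P b c → ¬ P b c' → c = c'
  nonrel_pred_unique : ∀ b a a' : Q.A, Q.tgt a = Q.src b → Q.tgt a' = Q.src b →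
    ¬ P a b → ¬ P a' b → a = a'
  rel_succ_unique : ∀ b c c' : Q.A, P b c → P b c' → c = c'
  rel_pred_unique : ∀ b a a' : Q.A, P a b → P a' b → a = a'
  bounded : ∃ N : ℕ, ∀ l : List Q.A,
    List.Chain' (fun a b => Q.tgt a = Q.src b) l → l.length = N →
      ∃ (l₁ : List Q.A) (a b : Q.A) (l₂ : List Q.A), l = l₁ ++ a :: b :: l₂ ∧ P a b

/-- Paths of a quiver: either a trivial path at a vertex, or a nonempty list of
composable arrows, recorded in traversal order. -/
def Pth (Q : Quiv) := Q.V ⊕ List Q.A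

/-- Two arrows are composable (first `a` then `b`) and do not form a relation. -/
def permPair (Q : Quiv) (P : Rels Q) (a b : Q.A) : Prop := Q.tgt a = Q.src b ∧ ¬ P a b

/-- Two arrows are composable (first `a` then `b`) and form a relation. -/
def forbPair (Q : Quiv) (P : Rels Q) (a b : Q.A) : Prop := Q.tgt a = Q.src b ∧ P a b

/-- "Nonzero path" in `kQ/⟨P⟩`: a trivial path, or a nonempty composable sequence of
arrows having no length-two subpath in `P`.  For nonempty lists this is exactly the
notion of a permitted path. -/
def pthOk (Q : Quiv) (P : Rels Q) : Pth Q → Prop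
  | Sum.inl _ => True
  | Sum.inr l => l ≠ [] ∧ List.Chain' (permPair Q P) l

/-- Start vertex of a path/thread. -/
def thStart (Q : Quiv) : Pth Q → Option Q.V
  | Sum.inl v => some v
  | Sum.inr l => l.head?.map Q.src

/-- End vertex of a path/thread. -/
def thEnd (Q : Quiv) : Pth Q → Option Q.V
  | Sum.inl v => some v
  | Sum.inr l => l.getLast?.map Q.tgt

/-- Length of a path/thread. -/
def thLen (Q : Quiv) : Pth Q → ℕ
  | Sum.inl _ => 0
  | Sum.inr l => l.length

/-- Permitted threads (trivial and non-trivial ones). -/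
def IsPermThread (Q : Quiv) (P : Rels Q) : Pth Q → Prop
  | Sum.inl v => Fintype.card {a : Q.A // Q.src a = v} ≤ 1 ∧
      Fintype.card {a : Q.A // Q.tgt a = v} ≤ 1 ∧
      ∀ b c : Q.A, Q.tgt b = v → Q.src c = v → ¬ P b c
  | Sum.inr l => l ≠ [] ∧ List.Chain' (permPair Q P) l ∧
      (∀ b : Q.A, ¬ List.Chain' (permPair Q P) (l ++ [b])) ∧
      (∀ b : Q.A, ¬ List.Chain' (permPair Q P) (b :: l))

/-- Forbidden threads (trivial and non-trivial ones). -/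
def IsForbThread (Q : Quiv) (P : Rels Q) : Pth Q → Prop
  | Sum.inl v => Fintype.card {a : Q.A // Q.src a = v} ≤ 1 ∧
      Fintype.card {a : Q.A // Q.tgt a = v} ≤ 1 ∧
      ∀ b c : Q.A, Q.tgt b = v → Q.src c = v → P b c
  | Sum.inr l => l ≠ [] ∧ l.Nodup ∧ List.Chain' (forbPair Q P) l ∧
      (∀ b : Q.A, ¬ ((l ++ [b]).Nodup ∧ List.Chain' (forbPair Q P) (l ++ [b]))) ∧
      (∀ b : Q.A, ¬ ((b :: l).Nodup ∧ List.Chain' (forbPair Q P) (b :: l)))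

/-- The axioms for the sign functions `σ, ε : Q₁ → {1,-1}`. -/
structure SgnOk (Q : Quiv) (P : Rels Q) (sg ep : Q.A → ℤ) : Prop where
  sg_pm : ∀ a : Q.A, sg a = 1 ∨ sg a = -1
  ep_pm : ∀ a : Q.A, ep a = 1 ∨ ep a = -1
  sg_opp : ∀ a b : Q.A, a ≠ b → Q.src a = Q.src b → sg a = - sg b
  ep_opp : ∀ a b : Q.A, a ≠ b → Q.tgt a = Q.tgt b → ep a = - ep b
  comp : ∀ a b : Q.A, Q.tgt a = Q.src b → ¬ P a b → sg b = - ep a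

/-- `σ` extended to permitted threads. -/
noncomputable def permSg (Q : Quiv) (sg ep : Q.A → ℤ) : Pth Q → Option ℤ
  | Sum.inl v =>
      if h : ∃ γ : Q.A, Q.src γ = v then some (-(sg h.choose))
      else if h2 : ∃ β : Q.A, Q.tgt β = v then some (ep h2.choose)
      else none
  | Sum.inr l => l.head?.map sg

/-- `ε` extended to permitted threads. -/
noncomputable def permEp (Q : Quiv) (sg ep : Q.A → ℤ) : Pth Q → Option ℤ
  | Sum.inl v => (permSg Q sg ep (Sum.inl v)).map (fun x => -x)
  | Sum.inr l => l.getLast?.map ep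

/-- `σ` extended to forbidden threads. -/
noncomputable def forbSg (Q : Quiv) (sg ep : Q.A → ℤ) : Pth Q → Option ℤ
  | Sum.inl v =>
      if h : ∃ γ : Q.A, Q.src γ = v then some (-(sg h.choose))
      else if h2 : ∃ β : Q.A, Q.tgt β = v then some (-(ep h2.choose))
      else none
  | Sum.inr l => l.head?.map sg

/-- `ε` extended to forbidden threads. -/
noncomputable def forbEp (Q : Quiv) (sg ep : Q.A → ℤ) : Pth Q → Option ℤ
  | Sum.inl v => forbSg Q sg ep (Sum.inl v)
  | Sum.inr l => l.getLast?.map ep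

/-- One step of the algorithm computing `φ_A`: from the permitted thread `H` one
passes backwards through the forbidden thread `Π` (of length `len`) ending at the
end of `H` with `ε(Π) = -ε(H)`, arriving at the permitted thread `H'` starting at
the start of `Π` with `σ(H') = -σ(Π)`. -/
noncomputable def AlgStep (Q : Quiv) (P : Rels Q) (sg ep : Q.A → ℤ)
    (H H' : Pth Q) (len : ℕ) : Prop :=
  IsPermThread Q P H ∧ IsPermThread Q P H' ∧
  ∃ Pi : Pth Q, IsForbThread Q P Pi ∧
    thEnd Q Pi = thEnd Q H ∧
    forbEp Q sg ep Pi = (permEp Q sg ep H).map (fun x => -x) ∧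
    thStart Q H' = thStart Q Pi ∧
    permSg Q sg ep H' = (forbSg Q sg ep Pi).map (fun x => -x) ∧
    len = thLen Q Pi

/-- The permitted thread `H` returns to itself for the first time after exactly `n`
steps of the algorithm, and the total length of the forbidden threads used is `m`. -/
noncomputable def CycleData (Q : Quiv) (P : Rels Q) (sg ep : Q.A → ℤ)
    (H : Pth Q) (n m : ℕ) : Prop :=
  0 < n ∧ IsPermThread Q P H ∧
  ∃ (f : ℕ → Pth Q) (g : ℕ → ℕ),
    f 0 = H ∧ f n = H ∧
    (∀ i, i < n → AlgStep Q P sg ep (f i) (f (i + 1)) (g i)) ∧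
    (∀ i, 0 < i → i < n → f i ≠ H) ∧
    m = ∑ i ∈ Finset.range n, g i

/-- A directed cycle in which each pair of (cyclically) consecutive arrows is a
relation; recorded as a nonempty duplicate-free list of arrows. -/
def IsRelCycle (Q : Quiv) (P : Rels Q) (l : List Q.A) : Prop :=
  l ≠ [] ∧ l.Nodup ∧ List.Chain' (forbPair Q P) l ∧
  ∃ a b : Q.A, l.head? = some a ∧ l.getLast? = some b ∧ Q.tgt b = Q.src a ∧ P b a

/-- The derived invariant `φ_A : ℕ² → ℕ` of a gentle algebra `A = kQ/⟨P⟩`.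
For `n ≥ 1`, `φ_A(n,m)` counts the cycles of the algorithm which use `n` permitted
threads and forbidden threads of total length `m` (each such cycle consists of `n`
permitted threads, whence the division); `φ_A(0,m)` counts the directed cycles of
length `m` in which any two consecutive arrows form a relation (counted up to
rotation: such a cycle of length `m` has exactly `m` rotations). -/
noncomputable def phi (Q : Quiv) (P : Rels Q) (sg ep : Q.A → ℤ) : ℕ × ℕ → ℕ :=
  fun p => match p with
  | (0, m) => Nat.card {l : List Q.A // IsRelCycle Q P l ∧ l.length = m} / m
  | (n + 1, m) => Nat.card {H : Pth Q // CycleData Q P sg ep H (n + 1) m} / (n + 1)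

/-- The Kronecker quiver: two vertices and two parallel arrows. -/
def IsKronecker (Q : Quiv) : Prop :=
  ∃ (v w : Q.V) (a b : Q.A), v ≠ w ∧ a ≠ b ∧ (∀ u : Q.V, u = v ∨ u = w) ∧
    (∀ c : Q.A, c = a ∨ c = b) ∧ (∀ c : Q.A, Q.src c = v ∧ Q.tgt c = w)

end GentlePaper

namespace GentlePaper

/-- Composition of paths: `pcomp Q C D` is the path `C∘D` ("first `D`, then `C`"),
or `none` if the paths are not composable. -/
def pcomp (Q : Quiv) : Pth Q → Pth Q → Option (Pth Q)
  | Sum.inl v, Sum.inl w => if v = w then some (Sum.inl v) else none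
  | Sum.inl v, Sum.inr l => if thEnd Q (Sum.inr l) = some v then some (Sum.inr l) else none
  | Sum.inr l, Sum.inl v => if thStart Q (Sum.inr l) = some v then some (Sum.inr l) else none
  | Sum.inr l, Sum.inr l' => some (Sum.inr (l' ++ l))

/-- The index set `Γ` of the canonical basis of `kQ/⟨P⟩`: residue classes of the
paths of `Q` not lying in `⟨P⟩`. -/
def Gam (Q : Quiv) (P : Rels Q) := {p : Pth Q // pthOk Q P p}

/-- The trivial path `1_v` as an element of `Γ`. -/
def trivGam (Q : Quiv) (P : Rels Q) (v : Q.V) : Gam Q P := ⟨Sum.inl v, trivial⟩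

/-- An arrow `a` as an element of `Γ`. -/
def arrGam (Q : Quiv) (P : Rels Q) (a : Q.A) : Gam Q P :=
  ⟨Sum.inr [a], ⟨List.cons_ne_nil a [], List.isChain_singleton a⟩⟩

/-- The basis vector attached to a path, or `0` if the path lies in `⟨P⟩`. -/
noncomputable def basImg {k : Type} [Field k] {Q : Quiv} {P : Rels Q} {A : Type}
    [Ring A] [Algebra k A] (bas : Module.Basis (Gam Q P) k A) (p : Pth Q) : A :=
  if h : pthOk Q P p then bas ⟨p, h⟩ else 0

/-- A presentation of the `k`-algebra `A` as the path algebra `kQ/⟨P⟩`: a `k`-basis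
indexed by the residue classes of nonzero paths, multiplying as paths do, with the
identity being the sum of the trivial paths.  An algebra admitting such a
presentation is precisely one isomorphic to `kQ/⟨P⟩`. -/
structure PathAlgPresentation (k : Type) [Field k] (Q : Quiv) (P : Rels Q)
    (A : Type) [Ring A] [Algebra k A] where
  bas : Module.Basis (Gam Q P) k A
  mul_bas : ∀ C D : Gam Q P,
    bas C * bas D = (pcomp Q C.1 D.1).elim 0 (basImg bas)
  one_bas : (1 : A) = ∑ v : Q.V, bas (trivGam Q P v)

namespace PathAlgPresentation

variable {k : Type} [Field k] {Q : Quiv} {P : Rels Q} {A : Type} [Ring A] [Algebra k A]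

/-- The idempotent `1_v` of the presented algebra. -/
noncomputable def e (pp : PathAlgPresentation k Q P A) (v : Q.V) : A :=
  pp.bas (trivGam Q P v)

/-- The coefficient `f_C(D)` of the basis element `C` in the expansion of `f(D)`. -/
noncomputable def coeff (pp : PathAlgPresentation k Q P A)
    (f : A ≃ₐ[k] A) (C D : Gam Q P) : k :=
  pp.bas.repr (f (pp.bas D)) C

/-- Membership in `Aut^l(A)`: algebra automorphisms fixing all the `1_v`. -/
def MemAutL (pp : PathAlgPresentation k Q P A) (f : A ≃ₐ[k] A) : Prop :=
  ∀ v : Q.V, f (pp.e v) = pp.e v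

/-- Membership in `Aut₊^l(A) = {f ∈ Aut^l(A) | f_α(α) ≠ 0 for all arrows α}`. -/
noncomputable def MemAutStar (pp : PathAlgPresentation k Q P A) (f : A ≃ₐ[k] A) : Prop :=
  pp.MemAutL f ∧ ∀ a : Q.A, pp.coeff f (arrGam Q P a) (arrGam Q P a) ≠ 0

/-- Membership in `S(Q₁)`: automorphisms in `Aut₊^l(A)` rescaling every arrow. -/
noncomputable def MemSQ1 (pp : PathAlgPresentation k Q P A) (f : A ≃ₐ[k] A) : Prop :=
  pp.MemAutStar f ∧ ∀ a : Q.A, ∃ c : kˣ,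
    f (pp.bas (arrGam Q P a)) = (c : k) • pp.bas (arrGam Q P a)

/-- Membership in `N(A) = {f ∈ Aut₊^l(A) | f_α(α) = 1 for all arrows α}`. -/
noncomputable def MemNA (pp : PathAlgPresentation k Q P A) (f : A ≃ₐ[k] A) : Prop :=
  pp.MemAutStar f ∧ ∀ a : Q.A, pp.coeff f (arrGam Q P a) (arrGam Q P a) = 1

/-- Membership of an element in the subalgebra `⊕_{v ∈ Q₀} 1_v A 1_v`. -/
noncomputable def IsDiag (pp : PathAlgPresentation k Q P A) (x : A) : Prop :=
  (∑ v : Q.V, pp.e v * x * pp.e v) = x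

/-- Membership in `Inn^l(A)`: inner automorphisms `ι_x` with `x` an invertible
element of `⊕_v 1_v A 1_v`. -/
noncomputable def MemInnL (pp : PathAlgPresentation k Q P A) (f : A ≃ₐ[k] A) : Prop :=
  ∃ x : Aˣ, pp.IsDiag (x : A) ∧ ∀ a : A, f a = (↑x⁻¹ : A) * a * (x : A)

/-- Membership in `Inn_S^l(A)`: inner automorphisms `ι_s`, `s = Σ_v c_v 1_v`, `c_v ∈ k*`. -/
noncomputable def MemInnS (pp : PathAlgPresentation k Q P A) (f : A ≃ₐ[k] A) : Prop :=
  ∃ (c : Q.V → kˣ) (x : Aˣ), ((x : A) = ∑ v : Q.V, (c v : k) • pp.e v) ∧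
    ∀ a : A, f a = (↑x⁻¹ : A) * a * (x : A)

/-- Membership in `Inn_N^l(A)`: inner automorphisms `ι_u`, `u = Σ_v (1_v + n_v)`,
with `n_v ∈ 1_v A 1_v` nilpotent. -/
noncomputable def MemInnN (pp : PathAlgPresentation k Q P A) (f : A ≃ₐ[k] A) : Prop :=
  ∃ (x : Aˣ) (n : Q.V → A), (∀ v : Q.V, IsNilpotent (n v)) ∧
    (∀ v : Q.V, pp.e v * n v * pp.e v = n v) ∧
    ((x : A) = ∑ v : Q.V, (pp.e v + n v)) ∧
    ∀ a : A, f a = (↑x⁻¹ : A) * a * (x : A)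

end PathAlgPresentation

end GentlePaper
namespace GentlePaper

section Lists

lemma chain_snoc {α : Type*} (r : α → α → Prop) :
    ∀ (l : List α) (a b : α), List.Chain r a (l ++ [b]) ↔
      List.Chain r a l ∧ r ((a :: l).getLast (by simp)) b := by
  intro l
  induction l with
  | nil => intro a b; simp [List.Chain]
  | cons c t ih =>
    intro a b
    simp only [List.Chain] at ih ⊢
    rw [List.cons_append, List.isChain_cons_cons, ih c b, List.isChain_cons_cons]
    constructor
    · rintro ⟨h1, h2, h3⟩
      refine ⟨⟨h1, h2⟩, ?_⟩
      rwa [List.getLast_cons (by simp)]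
    · rintro ⟨⟨h1, h2⟩, h3⟩
      rw [List.getLast_cons (by simp)] at h3
      exact ⟨h1, h2, h3⟩

end Lists

section Spanning

/-- Spanning-tree data for a connected quiver: a root `v0`, a parent arrow for each
non-root vertex, and a height function decreasing towards the root. -/
lemma spanning_tree (Q : Quiv) (hc : Connected Q) :
    ∃ (v0 : Q.V) (par : {v : Q.V // v ≠ v0} → Q.A) (ht : Q.V → ℕ),
      ∀ v : {v : Q.V // v ≠ v0},
        (Q.src (par v) = v.1 ∧ ht (Q.tgt (par v)) < ht v.1) ∨
        (Q.tgt (par v) = v.1 ∧ ht (Q.src (par v)) < ht v.1) := by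
  obtain ⟨⟨v0⟩, hreach⟩ := hc
  set r : Q.V → Q.V → Prop :=
    fun x y => ∃ a : Q.A, (Q.src a = x ∧ Q.tgt a = y) ∨ (Q.src a = y ∧ Q.tgt a = x) with hr
  have hex : ∀ v : Q.V, ∃ n : ℕ, ∃ l : List Q.V, List.Chain r v0 l ∧ l.length = n ∧
      (v0 :: l).getLast (by simp) = v := by
    intro v
    obtain ⟨l, hch, hlast⟩ := List.exists_isChain_cons_of_relationReflTransGen (hreach v0 v)
    exact ⟨l.length, l, hch, rfl, hlast⟩
  set ht : Q.V → ℕ := fun v => Nat.find (hex v) with hht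
  have key : ∀ v : Q.V, v ≠ v0 → ∃ u, r u v ∧ ht u < ht v := by
    intro v hv
    obtain ⟨l, hch, hlen, hlast⟩ := Nat.find_spec (hex v)
    have hl : l ≠ [] := by
      rintro rfl
      simp at hlast
      exact hv hlast.symm
    have hdec : l = l.dropLast ++ [l.getLast hl] := (List.dropLast_append_getLast hl).symm
    have hlast2 : l.getLast hl = v := by
      rw [List.getLast_cons hl] at hlast; exact hlast
    rw [hdec] at hch
    rw [chain_snoc] at hch
    obtain ⟨hch1, hstep⟩ := hch
    refine ⟨(v0 :: l.dropLast).getLast (by simp), by rwa [hlast2] at hstep, ?_⟩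
    have h1 : ht ((v0 :: l.dropLast).getLast (by simp)) ≤ l.dropLast.length :=
      Nat.find_le ⟨l.dropLast, hch1, rfl, rfl⟩
    have h2 : l.dropLast.length < l.length := by
      rw [List.length_dropLast]
      have := List.length_pos_iff.mpr hl
      omega
    have h3 : l.length = ht v := hlen
    omega
  have key2 : ∀ v : {v : Q.V // v ≠ v0}, ∃ a : Q.A,
      (Q.src a = v.1 ∧ ht (Q.tgt a) < ht v.1) ∨ (Q.tgt a = v.1 ∧ ht (Q.src a) < ht v.1) := by
    intro v
    obtain ⟨u, ⟨a, h⟩, hlt⟩ := key v.1 v.2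
    refine ⟨a, ?_⟩
    rcases h with ⟨hs, htg⟩ | ⟨hs, htg⟩
    · exact Or.inr ⟨htg, by rwa [hs]⟩
    · exact Or.inl ⟨hs, by rwa [htg]⟩
  exact ⟨v0, fun v => (key2 v).choose, ht, fun v => (key2 v).choose_spec⟩

variable {G : Type*} [CommGroup G]

/-- Solve for a vertex-function whose "coboundary" matches `w` on the tree arrows. -/
noncomputable def sol (Q : Quiv) (v0 : Q.V)
    (par : {v : Q.V // v ≠ v0} → Q.A) (ht : Q.V → ℕ)
    (hp : ∀ v : {v : Q.V // v ≠ v0},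
        (Q.src (par v) = v.1 ∧ ht (Q.tgt (par v)) < ht v.1) ∨
        (Q.tgt (par v) = v.1 ∧ ht (Q.src (par v)) < ht v.1))
    (w : Q.A → G) (v : Q.V) : G :=
  if h : v = v0 then 1
  else if hs : Q.src (par ⟨v, h⟩) = v ∧ ht (Q.tgt (par ⟨v, h⟩)) < ht v then
    w (par ⟨v, h⟩) * sol Q v0 par ht hp w (Q.tgt (par ⟨v, h⟩))
  else
    sol Q v0 par ht hp w (Q.src (par ⟨v, h⟩)) * (w (par ⟨v, h⟩))⁻¹
termination_by ht v
decreasing_by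
  · exact hs.2
  · rcases hp ⟨v, h⟩ with h1 | h2
    · exact absurd h1 hs
    · exact h2.2

variable (Q : Quiv) (v0 : Q.V)
  (par : {v : Q.V // v ≠ v0} → Q.A) (ht : Q.V → ℕ)
  (hp : ∀ v : {v : Q.V // v ≠ v0},
        (Q.src (par v) = v.1 ∧ ht (Q.tgt (par v)) < ht v.1) ∨
        (Q.tgt (par v) = v.1 ∧ ht (Q.src (par v)) < ht v.1))
  (w : Q.A → G)

lemma sol_spec (v : {v : Q.V // v ≠ v0}) :
    sol Q v0 par ht hp w (Q.src (par v)) * (sol Q v0 par ht hp w (Q.tgt (par v)))⁻¹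
      = w (par v) := by
  obtain ⟨v, h⟩ := v
  by_cases hs : Q.src (par ⟨v, h⟩) = v ∧ ht (Q.tgt (par ⟨v, h⟩)) < ht v
  · have hv : sol Q v0 par ht hp w v
        = w (par ⟨v, h⟩) * sol Q v0 par ht hp w (Q.tgt (par ⟨v, h⟩)) := by
      rw [sol]; rw [dif_neg h, dif_pos hs]
    rw [hs.1, hv, mul_inv_cancel_right]
  · have h2 := (hp ⟨v, h⟩).resolve_left hs
    have hv : sol Q v0 par ht hp w v
        = sol Q v0 par ht hp w (Q.src (par ⟨v, h⟩)) * (w (par ⟨v, h⟩))⁻¹ := by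
      rw [sol]; rw [dif_neg h, dif_neg hs]
    rw [h2.1, hv, mul_inv_rev, inv_inv, mul_comm (w _), ← mul_assoc, mul_inv_cancel, one_mul]

include ht hp in
lemma sol_ker (c : Q.V → G)
    (hq : ∀ v : {v : Q.V // v ≠ v0}, c (Q.src (par v)) * (c (Q.tgt (par v)))⁻¹ = 1) :
    ∀ v, c v = c v0 := by
  have H : ∀ n v, ht v = n → c v = c v0 := by
    intro n
    induction n using Nat.strong_induction_on with
    | _ n ih =>
      intro v hn
      by_cases h : v = v0
      · rw [h]
      · rcases hp ⟨v, h⟩ with ⟨h1, h2⟩ | ⟨h1, h2⟩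
        · have hc1 := mul_inv_eq_one.mp (hq ⟨v, h⟩)
          rw [h1] at hc1
          rw [hc1]
          exact ih _ (hn ▸ h2) _ rfl
        · have hc1 := mul_inv_eq_one.mp (hq ⟨v, h⟩)
          rw [h1] at hc1
          rw [← hc1]
          exact ih _ (hn ▸ h2) _ rfl
  intro v; exact H _ v rfl

end Spanning

end GentlePaper
namespace GentlePaper

open PathAlgPresentation

section Alg

variable {k : Type} [Field k] {Q : Quiv} {P : Rels Q} {A : Type} [Ring A] [Algebra k A]

/-- The coboundary homomorphism `(Q.V → G) →* (Q.A → G)`. -/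
def dh (Q : Quiv) (G : Type*) [CommGroup G] : (Q.V → G) →* (Q.A → G) :=
  MonoidHom.mk' (fun c a => c (Q.src a) * (c (Q.tgt a))⁻¹) (by
    intro c c'
    funext a
    show (c (Q.src a) * c' (Q.src a)) * ((c (Q.tgt a)) * (c' (Q.tgt a)))⁻¹ = _
    rw [mul_inv]
    exact mul_mul_mul_comm _ _ _ _)

@[simp] lemma dh_apply (G : Type*) [CommGroup G] (c : Q.V → G) (a : Q.A) :
    dh Q G c a = c (Q.src a) * (c (Q.tgt a))⁻¹ := rfl

/-- The multiplicative weight of a path. -/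
def wgt (w : Q.A → kˣ) : Pth Q → kˣ
  | Sum.inl _ => 1
  | Sum.inr l => (l.map w).prod

@[simp] lemma wgt_inl (w : Q.A → kˣ) (v : Q.V) : wgt w (Sum.inl v) = 1 := rfl
@[simp] lemma wgt_inr (w : Q.A → kˣ) (l : List Q.A) : wgt w (Sum.inr l) = (l.map w).prod := rfl

lemma wgt_one (p : Pth Q) : wgt (1 : Q.A → kˣ) p = 1 := by
  cases p with
  | inl v => rfl
  | inr l =>
    simp only [wgt]
    refine List.prod_eq_one ?_
    intro x hx
    rcases List.mem_map.mp hx with ⟨a, _, rfl⟩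
    rfl

lemma wgt_mul (w w' : Q.A → kˣ) (p : Pth Q) : wgt (w * w') p = wgt w p * wgt w' p := by
  cases p with
  | inl v => simp [wgt]
  | inr l =>
    simp only [wgt]
    rw [show (l.map (w * w')) = l.map (fun a => w a * w' a) from rfl]
    exact List.prod_map_mul

lemma wgt_pcomp (w : Q.A → kˣ) {p q E : Pth Q} (h : pcomp Q p q = some E) :
    wgt w E = wgt w p * wgt w q := by
  cases p with
  | inl v =>
    cases q with
    | inl v' =>
      simp only [pcomp] at h
      split at h
      · cases h; simp
      · cases h
    | inr l =>
      simp only [pcomp] at h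
      split at h
      · cases h; simp
      · cases h
  | inr l =>
    cases q with
    | inl v' =>
      simp only [pcomp] at h
      split at h
      · cases h; simp
      · cases h
    | inr l' =>
      simp only [pcomp] at h
      cases h
      simp [List.map_append, List.prod_append, mul_comm]

variable (pp : PathAlgPresentation k Q P A)

/-- The linear endomorphism scaling the basis element of a path by its weight. -/
noncomputable def scaleL (w : Q.A → kˣ) : A →ₗ[k] A :=
  pp.bas.constr k (fun D => (wgt w D.1 : k) • pp.bas D)

@[simp] lemma scaleL_bas (w : Q.A → kˣ) (D : Gam Q P) :
    scaleL pp w (pp.bas D) = (wgt w D.1 : k) • pp.bas D :=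
  pp.bas.constr_basis k _ D

lemma scaleL_comp (w w' : Q.A → kˣ) :
    (scaleL pp w).comp (scaleL pp w') = scaleL pp (w * w') := by
  apply pp.bas.ext
  intro D
  simp [map_smul, wgt_mul, smul_smul, mul_comm]

lemma scaleL_one : scaleL pp (1 : Q.A → kˣ) = LinearMap.id := by
  apply pp.bas.ext
  intro D
  simp [wgt_one]

/-- `scaleL` as a linear equivalence. -/
noncomputable def scaleE (w : Q.A → kˣ) : A ≃ₗ[k] A :=
  LinearEquiv.ofLinear (scaleL pp w) (scaleL pp w⁻¹)
    (by rw [scaleL_comp, mul_inv_cancel, scaleL_one])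
    (by rw [scaleL_comp, inv_mul_cancel, scaleL_one])

@[simp] lemma scaleE_apply (w : Q.A → kˣ) (x : A) : scaleE pp w x = scaleL pp w x := rfl

lemma scaleL_one_elem (w : Q.A → kˣ) : scaleL pp w (1 : A) = 1 := by
  rw [pp.one_bas, map_sum]
  refine Finset.sum_congr rfl (fun v _ => ?_)
  exact (scaleL_bas pp w _).trans (by rw [show wgt w (trivGam Q P v).1 = 1 from rfl, Units.val_one, one_smul])

lemma scaleL_mul_elem (w : Q.A → kˣ) (x y : A) :
    scaleL pp w (x * y) = scaleL pp w x * scaleL pp w y := by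
  have key : ∀ C D : Gam Q P,
      scaleL pp w (pp.bas C * pp.bas D) = scaleL pp w (pp.bas C) * scaleL pp w (pp.bas D) := by
    intro C D
    rw [scaleL_bas, scaleL_bas, smul_mul_smul_comm, pp.mul_bas]
    rcases hE : pcomp Q C.1 D.1 with _ | E
    · simp
    · simp only [Option.elim]
      unfold basImg
      by_cases hok : pthOk Q P E
      · rw [dif_pos hok]
        refine (scaleL_bas pp w ⟨E, hok⟩).trans ?_
        congr 1
        rw [← Units.val_mul]
        congr 1
        exact wgt_pcomp w hE
      · rw [dif_neg hok]
        simp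
  have h2 : (LinearMap.mul k A).compr₂ (scaleL pp w)
      = (LinearMap.mul k A).compl₁₂ (scaleL pp w) (scaleL pp w) := by
    apply pp.bas.ext
    intro C
    apply pp.bas.ext
    intro D
    simpa using key C D
  have := LinearMap.congr_fun (LinearMap.congr_fun h2 x) y
  simpa using this

/-- The automorphism of `A` scaling each basis path by its weight. -/
noncomputable def scaleAut (w : Q.A → kˣ) : A ≃ₐ[k] A :=
  AlgEquiv.ofLinearEquiv (scaleE pp w) (scaleL_one_elem pp w) (scaleL_mul_elem pp w)

@[simp] lemma scaleAut_apply (w : Q.A → kˣ) (x : A) : scaleAut pp w x = scaleL pp w x := rfl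

/-- The scaling automorphisms, as a monoid homomorphism `(Q.A → kˣ) →* Aut(A)`. -/
noncomputable def theta : (Q.A → kˣ) →* (A ≃ₐ[k] A) :=
  MonoidHom.mk' (fun w => scaleAut pp w) (by
    intro w w'
    apply AlgEquiv.ext
    intro x
    show scaleL pp (w * w') x = scaleL pp w (scaleL pp w' x)
    rw [← LinearMap.comp_apply, scaleL_comp])

@[simp] lemma theta_bas (w : Q.A → kˣ) (D : Gam Q P) :
    theta pp w (pp.bas D) = (wgt w D.1 : k) • pp.bas D := scaleL_bas pp w D

lemma theta_e (w : Q.A → kˣ) (v : Q.V) : theta pp w (pp.e v) = pp.e v := by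
  show theta pp w (pp.bas (trivGam Q P v)) = pp.bas (trivGam Q P v)
  rw [theta_bas]
  simp [trivGam]

lemma theta_arr (w : Q.A → kˣ) (a : Q.A) :
    theta pp w (pp.bas (arrGam Q P a)) = (w a : k) • pp.bas (arrGam Q P a) := by
  rw [theta_bas]
  simp [arrGam]

lemma theta_inj : Function.Injective (theta pp) := by
  intro w w' h
  funext a
  have h1 := congrArg (fun f : A ≃ₐ[k] A => f (pp.bas (arrGam Q P a))) h
  simp only [theta_arr] at h1
  have h2 := congrArg (fun x => pp.bas.repr x (arrGam Q P a)) h1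
  simp only [map_smul, Module.Basis.repr_self, Finsupp.smul_apply, Finsupp.single_eq_same,
    smul_eq_mul, mul_one] at h2
  exact Units.ext h2

end Alg

end GentlePaper
namespace GentlePaper

open PathAlgPresentation

section Alg2

variable {k : Type} [Field k] {Q : Quiv} {P : Rels Q} {A : Type} [Ring A] [Algebra k A]
variable (pp : PathAlgPresentation k Q P A)

lemma e_mul_e (v w : Q.V) : pp.e v * pp.e w = if v = w then pp.e v else 0 := by
  show pp.bas (trivGam Q P v) * pp.bas (trivGam Q P w) = _
  rw [pp.mul_bas]
  show (pcomp Q (Sum.inl v) (Sum.inl w)).elim 0 (basImg pp.bas) = _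
  by_cases h : v = w
  · subst h
    simp [pcomp, basImg, pthOk, e, trivGam]
    exact dif_pos trivial
  · simp [pcomp, h]

/-- The start vertex of a nonzero path. -/
def startV : Gam Q P → Q.V
  | ⟨Sum.inl v, _⟩ => v
  | ⟨Sum.inr l, h⟩ => Q.src (l.head h.1)

/-- The end vertex of a nonzero path. -/
def endV : Gam Q P → Q.V
  | ⟨Sum.inl v, _⟩ => v
  | ⟨Sum.inr l, h⟩ => Q.tgt (l.getLast h.1)

lemma thStart_eq (D : Gam Q P) : thStart Q D.1 = some (startV D) := by
  rcases D with ⟨p, h⟩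
  cases p with
  | inl v => rfl
  | inr l =>
    show (l.head?).map Q.src = _
    rw [List.head?_eq_head h.1]
    rfl

lemma thEnd_eq (D : Gam Q P) : thEnd Q D.1 = some (endV D) := by
  rcases D with ⟨p, h⟩
  cases p with
  | inl v => rfl
  | inr l =>
    show (l.getLast?).map Q.tgt = _
    rw [List.getLast?_eq_getLast h.1]
    rfl

lemma bas_mul_e (D : Gam Q P) (v : Q.V) :
    pp.bas D * pp.e v = if startV D = v then pp.bas D else 0 := by
  show pp.bas D * pp.bas (trivGam Q P v) = _
  rw [pp.mul_bas]
  rcases D with ⟨p, h⟩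
  cases p with
  | inl w =>
    show (pcomp Q (Sum.inl w) (Sum.inl v)).elim 0 (basImg pp.bas) = _
    by_cases hw : w = v
    · subst hw
      simp [pcomp, basImg, pthOk, startV, trivGam]
      exact dif_pos h
    · simp [pcomp, hw, startV]
  | inr l =>
    show (pcomp Q (Sum.inr l) (Sum.inl v)).elim 0 (basImg pp.bas) = _
    have hst : thStart Q (Sum.inr l) = some (startV ⟨Sum.inr l, h⟩) := thStart_eq (⟨Sum.inr l, h⟩ : Gam Q P)
    by_cases hw : startV (⟨Sum.inr l, h⟩ : Gam Q P) = v
    · rw [if_pos hw]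
      simp only [pcomp, hst, hw, if_pos rfl]
      show basImg pp.bas (Sum.inr l) = _
      unfold basImg
      rw [dif_pos h]
    · rw [if_neg hw]
      have : ¬ (thStart Q (Sum.inr l) = some v) := by
        rw [hst]; simpa using hw
      simp only [pcomp, if_neg this]
      rfl

lemma e_mul_bas (D : Gam Q P) (v : Q.V) :
    pp.e v * pp.bas D = if endV D = v then pp.bas D else 0 := by
  show pp.bas (trivGam Q P v) * pp.bas D = _
  rw [pp.mul_bas]
  rcases D with ⟨p, h⟩
  cases p with
  | inl w =>
    show (pcomp Q (Sum.inl v) (Sum.inl w)).elim 0 (basImg pp.bas) = _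
    by_cases hw : w = v
    · subst hw
      simp [pcomp, basImg, pthOk, endV, trivGam]
      exact dif_pos h
    · simp [pcomp, hw, Ne.symm hw, endV]
  | inr l =>
    show (pcomp Q (Sum.inl v) (Sum.inr l)).elim 0 (basImg pp.bas) = _
    have hst : thEnd Q (Sum.inr l) = some (endV ⟨Sum.inr l, h⟩) := thEnd_eq (⟨Sum.inr l, h⟩ : Gam Q P)
    by_cases hw : endV (⟨Sum.inr l, h⟩ : Gam Q P) = v
    · rw [if_pos hw]
      simp only [pcomp, hst, hw, if_pos rfl]
      show basImg pp.bas (Sum.inr l) = _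
      unfold basImg
      rw [dif_pos h]
    · rw [if_neg hw]
      have : ¬ (thEnd Q (Sum.inr l) = some v) := by
        rw [hst]; simpa using hw
      simp only [pcomp, if_neg this]
      rfl

lemma bas_mul_sum (D : Gam Q P) (c : Q.V → kˣ) :
    pp.bas D * (∑ v : Q.V, (c v : k) • pp.e v) = (c (startV D) : k) • pp.bas D := by
  rw [Finset.mul_sum]
  rw [Finset.sum_eq_single (startV D)]
  · rw [mul_smul_comm, bas_mul_e, if_pos rfl]
  · intro v _ hv
    rw [mul_smul_comm, bas_mul_e, if_neg (fun h => hv h.symm), smul_zero]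
  · intro h
    exact absurd (Finset.mem_univ _) h

lemma sum_mul_bas (D : Gam Q P) (c : Q.V → kˣ) :
    (∑ v : Q.V, (c v : k) • pp.e v) * pp.bas D = (c (endV D) : k) • pp.bas D := by
  rw [Finset.sum_mul]
  rw [Finset.sum_eq_single (endV D)]
  · rw [smul_mul_assoc, e_mul_bas, if_pos rfl]
  · intro v _ hv
    rw [smul_mul_assoc, e_mul_bas, if_neg (fun h => hv h.symm), smul_zero]
  · intro h
    exact absurd (Finset.mem_univ _) h

/-- The invertible diagonal element `∑ c_v 1_v`. -/
noncomputable def diagUnit (c : Q.V → kˣ) : Aˣ where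
  val := ∑ v : Q.V, (c v : k) • pp.e v
  inv := ∑ v : Q.V, (((c v)⁻¹ : kˣ) : k) • pp.e v
  val_inv := by
    rw [Finset.sum_mul]
    have : ∀ v ∈ Finset.univ, ((c v : k) • pp.e v) * (∑ u : Q.V, (((c u)⁻¹ : kˣ) : k) • pp.e u)
        = pp.e v := by
      intro v _
      rw [Finset.mul_sum]
      rw [Finset.sum_eq_single v]
      · rw [smul_mul_smul_comm, e_mul_e, if_pos rfl, ← Units.val_mul, mul_inv_cancel,
          Units.val_one, one_smul]
      · intro u _ hu
        rw [smul_mul_smul_comm, e_mul_e, if_neg (fun h => hu h.symm), smul_zero]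
      · intro h
        exact absurd (Finset.mem_univ _) h
    rw [Finset.sum_congr rfl this]
    exact pp.one_bas.symm
  inv_val := by
    rw [Finset.sum_mul]
    have : ∀ v ∈ Finset.univ, ((((c v)⁻¹ : kˣ) : k) • pp.e v) * (∑ u : Q.V, ((c u : k)) • pp.e u)
        = pp.e v := by
      intro v _
      rw [Finset.mul_sum]
      rw [Finset.sum_eq_single v]
      · rw [smul_mul_smul_comm, e_mul_e, if_pos rfl, ← Units.val_mul, inv_mul_cancel,
          Units.val_one, one_smul]
      · intro u _ hu
        rw [smul_mul_smul_comm, e_mul_e, if_neg (fun h => hu h.symm), smul_zero]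
      · intro h
        exact absurd (Finset.mem_univ _) h
    rw [Finset.sum_congr rfl this]
    exact pp.one_bas.symm

@[simp] lemma diagUnit_val (c : Q.V → kˣ) :
    ((diagUnit pp c : Aˣ) : A) = ∑ v : Q.V, (c v : k) • pp.e v := rfl

@[simp] lemma diagUnit_inv (c : Q.V → kˣ) :
    (((diagUnit pp c)⁻¹ : Aˣ) : A) = ∑ v : Q.V, (((c v)⁻¹ : kˣ) : k) • pp.e v := rfl

end Alg2

end GentlePaper
namespace GentlePaper

open PathAlgPresentation

section Alg3

variable {k : Type} [Field k] {Q : Quiv} {P : Rels Q} {A : Type} [Ring A] [Algebra k A]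
variable (pp : PathAlgPresentation k Q P A)

lemma wgt_dh_list (c : Q.V → kˣ) :
    ∀ (l : List Q.A) (hne : l ≠ []), List.Chain' (fun a b => Q.tgt a = Q.src b) l →
    (l.map (dh Q kˣ c)).prod = c (Q.src (l.head hne)) * (c (Q.tgt (l.getLast hne)))⁻¹ := by
  intro l
  induction l with
  | nil => intro hne; exact absurd rfl hne
  | cons a t ih =>
    intro hne hch
    cases t with
    | nil => simp [dh]
    | cons b t' =>
      simp only [List.Chain', List.isChain_cons_cons] at hch
      have h1 := ih (by simp) hch.2
      rw [List.map_cons, List.prod_cons, h1]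
      have hhead : (b :: t').head (by simp) = b := rfl
      rw [hhead]
      show (c (Q.src a) * (c (Q.tgt a))⁻¹) * _ = _
      rw [hch.1]
      rw [List.head_cons, List.getLast_cons (by simp : (b :: t') ≠ [])]
      rw [mul_assoc, inv_mul_cancel_left]

lemma wgt_dh (c : Q.V → kˣ) (D : Gam Q P) :
    wgt (dh Q kˣ c) D.1 = c (startV D) * (c (endV D))⁻¹ := by
  rcases D with ⟨p, h⟩
  cases p with
  | inl v => simp [startV, endV]
  | inr l =>
    have hcomp : List.Chain' (fun a b => Q.tgt a = Q.src b) l :=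
      List.IsChain.imp (fun a b hab => hab.1) h.2
    show (l.map (dh Q kˣ c)).prod = _
    rw [wgt_dh_list c l h.1 hcomp]
    rfl

lemma theta_dh_conj (c : Q.V → kˣ) (a : A) :
    theta pp (dh Q kˣ c) a = (↑(diagUnit pp c)⁻¹ : A) * a * (diagUnit pp c : A) := by
  have hlin : (theta pp (dh Q kˣ c)).toLinearMap
      = (LinearMap.mulLeft k ((↑(diagUnit pp c)⁻¹ : A))).comp
          (LinearMap.mulRight k ((diagUnit pp c : A))) := by
    apply pp.bas.ext
    intro D
    simp only [AlgEquiv.toLinearMap_apply, LinearMap.comp_apply, LinearMap.mulRight_apply,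
      LinearMap.mulLeft_apply, theta_bas]
    rw [diagUnit_val, diagUnit_inv, bas_mul_sum, mul_smul_comm, sum_mul_bas, wgt_dh]
    rw [smul_smul]
    norm_cast
  have := LinearMap.congr_fun hlin a
  simpa [mul_assoc] using this

/-- Automorphisms agreeing on idempotents and arrows agree. -/
lemma aut_ext (f g : A ≃ₐ[k] A) (he : ∀ v : Q.V, f (pp.e v) = g (pp.e v))
    (ha : ∀ a : Q.A, f (pp.bas (arrGam Q P a)) = g (pp.bas (arrGam Q P a))) : f = g := by
  have hl : ∀ (l : List Q.A) (h : pthOk Q P (Sum.inr l)),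
      f (pp.bas ⟨Sum.inr l, h⟩) = g (pp.bas ⟨Sum.inr l, h⟩) := by
    intro l
    induction l with
    | nil => intro h; exact absurd rfl h.1
    | cons a t ih =>
      intro h
      by_cases ht : t = []
      · subst ht; exact ha a
      · have h' : pthOk Q P (Sum.inr t) := ⟨ht, h.2.tail⟩
        have hdec : pp.bas ⟨Sum.inr (a :: t), h⟩
            = pp.bas ⟨Sum.inr t, h'⟩ * pp.bas (arrGam Q P a) := by
          refine Eq.trans ?_ (pp.mul_bas _ _).symm
          show _ = (pcomp Q (Sum.inr t) (Sum.inr [a])).elim 0 (basImg pp.bas)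
          simp only [pcomp, Option.elim, List.singleton_append]
          unfold basImg
          rw [dif_pos h]
        rw [hdec, map_mul, map_mul, ih h', ha a]
  have hlm : f.toLinearMap = g.toLinearMap := by
    apply pp.bas.ext
    intro D
    rcases D with ⟨p, h⟩
    cases p with
    | inl v => exact he v
    | inr l => exact hl l h
  exact AlgEquiv.ext (fun x => LinearMap.congr_fun hlm x)

lemma setS_eq : {f : A ≃ₐ[k] A | pp.MemSQ1 f} = Set.range (theta pp) := by
  ext f
  constructor
  · rintro ⟨⟨hL, _⟩, hsc⟩
    refine ⟨fun a => (hsc a).choose, ?_⟩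
    apply aut_ext pp
    · intro v; rw [theta_e]; exact (hL v).symm
    · intro a
      rw [theta_arr]
      exact ((hsc a).choose_spec).symm
  · rintro ⟨w, rfl⟩
    refine ⟨⟨fun v => theta_e pp w v, fun a => ?_⟩, fun a => ⟨w a, theta_arr pp w a⟩⟩
    unfold PathAlgPresentation.coeff
    rw [theta_arr]
    simp only [map_smul, Module.Basis.repr_self, Finsupp.smul_apply, Finsupp.single_eq_same,
      smul_eq_mul, mul_one]
    exact (w a).ne_zero

lemma setIs_eq : {f : A ≃ₐ[k] A | pp.MemInnS f} = (theta pp) '' (Set.range (dh Q kˣ)) := by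
  ext f
  constructor
  · rintro ⟨c, x, hx, hconj⟩
    have hxe : x = diagUnit pp c := Units.ext (by rw [hx, diagUnit_val])
    refine ⟨dh Q kˣ c, ⟨c, rfl⟩, ?_⟩
    apply AlgEquiv.ext
    intro a
    rw [theta_dh_conj, hconj a, hxe]
  · rintro ⟨w, ⟨c, rfl⟩, rfl⟩
    exact ⟨c, diagUnit pp c, rfl, fun a => theta_dh_conj pp c a⟩

end Alg3

end GentlePaper
namespace GentlePaper

open PathAlgPresentation


set_option maxHeartbeats 1000000 in
/-- `Inn_S^l(A) ≅ (k*)^{#Q₀-1}`, it is a subgroup of `S(Q₁)`, and the quotient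
`S(Q₁)/Inn_S^l(A)` is isomorphic to `(k*)^{c(Q)}`. -/
theorem innS_iso_and_quotient
    (k : Type) [Field k] (Q : Quiv) (P : Rels Q)
    (A : Type) [Ring A] [Algebra k A]
    (pp : PathAlgPresentation k Q P A) (hg : IsGentle Q P)
    (hc : Connected Q) :
    ∃ (S Is : Subgroup (A ≃ₐ[k] A)),
      ((S : Set (A ≃ₐ[k] A)) = {f | pp.MemSQ1 f}) ∧
      ((Is : Set (A ≃ₐ[k] A)) = {f | pp.MemInnS f}) ∧
      Is ≤ S ∧
      Nonempty (↥Is ≃* (Fin (Fintype.card Q.V - 1) → kˣ)) ∧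
      ∃ hn : (Is.subgroupOf S).Normal,
        letI := hn
        Nonempty ((↥S ⧸ Is.subgroupOf S) ≃* (Fin (cQ Q) → kˣ)) := by
  classical
  obtain ⟨v0, par, ht, hp⟩ := spanning_tree Q hc
  have hinj : Function.Injective (theta pp) := theta_inj pp
  -- common counting facts
  have hV1 : 1 ≤ Fintype.card Q.V := Fintype.card_pos_iff.mpr hc.1
  have hcard1 : Fintype.card {v : Q.V // v ≠ v0} = Fintype.card Q.V - 1 := by
    have h1 := Fintype.card_subtype_compl (fun v : Q.V => v = v0)
    rw [Fintype.card_subtype_eq] at h1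
    exact h1
  refine ⟨(theta pp).range, Subgroup.map (theta pp) (dh Q kˣ).range, ?_, ?_,
    Subgroup.map_le_range _ _, ?_, ?_⟩
  · rw [MonoidHom.coe_range]
    exact (setS_eq pp).symm
  · rw [Subgroup.coe_map, MonoidHom.coe_range]
    exact (setIs_eq pp).symm
  · -- Is ≅ (kˣ)^(#V-1)
    have e1 := Subgroup.equivMapOfInjective ((dh Q kˣ).range) (theta pp) hinj
    have e2 := QuotientGroup.quotientKerEquivRange (dh Q kˣ)
    set R : (Q.V → kˣ) →* ({v : Q.V // v ≠ v0} → kˣ) :=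
      MonoidHom.mk' (fun c u => c u.1 * (c v0)⁻¹) (by
        intro c c'
        funext u
        show (c u.1 * c' u.1) * ((c v0) * (c' v0))⁻¹ = _
        rw [mul_inv]
        exact mul_mul_mul_comm _ _ _ _) with hR
    have hkerconst : ∀ c : Q.V → kˣ, dh Q kˣ c = 1 → ∀ v w : Q.V, c v = c w := by
      intro c hcm
      have h1 : ∀ a : Q.A, c (Q.src a) = c (Q.tgt a) := by
        intro a
        have h2 := congrFun hcm a
        rw [Pi.one_apply] at h2
        exact mul_inv_eq_one.mp h2
      intro v w
      induction hc.2 v w with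
      | refl => rfl
      | tail _ hstep ih =>
        rcases hstep with ⟨a, ⟨hs, htg⟩ | ⟨hs, htg⟩⟩
        · rw [ih, ← hs, h1 a, htg]
        · rw [ih, ← htg, ← h1 a, hs]
    have hker : (dh Q kˣ).ker = R.ker := by
      ext c
      simp only [MonoidHom.mem_ker]
      constructor
      · intro h
        funext u
        show c u.1 * (c v0)⁻¹ = 1
        rw [hkerconst c h u.1 v0, mul_inv_cancel]
      · intro h
        have hu : ∀ v : Q.V, c v = c v0 := by
          intro v
          by_cases hv : v = v0
          · rw [hv]
          · have h2 := congrFun h ⟨v, hv⟩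
            rw [Pi.one_apply] at h2
            exact mul_inv_eq_one.mp h2
        funext a
        show c (Q.src a) * (c (Q.tgt a))⁻¹ = 1
        rw [hu (Q.src a), hu (Q.tgt a), mul_inv_cancel]
    have hRsurj : Function.Surjective R := by
      intro g
      refine ⟨fun v => if hv : v = v0 then 1 else g ⟨v, hv⟩, ?_⟩
      funext u
      show (if hv : u.1 = v0 then 1 else g ⟨u.1, hv⟩)
          * (if hv : v0 = v0 then 1 else g ⟨v0, hv⟩)⁻¹ = g u
      rw [dif_pos rfl, dif_neg u.2, inv_one, mul_one]
    have e3 := QuotientGroup.quotientMulEquivOfEq hker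
    have e4 := QuotientGroup.quotientKerEquivOfSurjective R hRsurj
    exact ⟨e1.symm.trans (e2.symm.trans (e3.trans (e4.trans
      (MulEquiv.arrowCongr (Fintype.equivFinOfCardEq hcard1) (MulEquiv.refl kˣ)))))⟩
  · -- quotient
    have hcomm : ∀ x y : ↥(theta pp).range, x * y = y * x := by
      rintro ⟨x, hx⟩ ⟨y, hy⟩
      obtain ⟨wx, rfl⟩ := MonoidHom.mem_range.mp hx
      obtain ⟨wy, rfl⟩ := MonoidHom.mem_range.mp hy
      apply Subtype.ext
      show theta pp wx * theta pp wy = theta pp wy * theta pp wx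
      rw [← map_mul, ← map_mul, mul_comm]
    have hn : (((Subgroup.map (theta pp) (dh Q kˣ).range)).subgroupOf
        (theta pp).range).Normal := by
      constructor
      intro n hmem g
      have hgn : g * n * g⁻¹ = n := by
        rw [hcomm g n, mul_assoc, mul_inv_cancel, mul_one]
      rwa [hgn]
    refine ⟨hn, ?_⟩
    letI := hn
    set T : Set Q.A := Set.range (fun v : {v : Q.V // v ≠ v0} => par v) with hT
    have hparinj : Function.Injective par := by
      intro u v huv
      rcases hp u with ⟨h1, h2⟩ | ⟨h1, h2⟩ <;> rcases hp v with ⟨h3, h4⟩ | ⟨h3, h4⟩ <;>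
        rw [huv] at h1 h2
      · exact Subtype.ext (by rw [← h1, h3])
      · rw [h3] at h2; rw [h1] at h4; omega
      · rw [h3] at h2; rw [h1] at h4; omega
      · exact Subtype.ext (by rw [← h1, h3])
    have hcardT : Fintype.card {a : Q.A // a ∈ T} = Fintype.card Q.V - 1 := by
      rw [← hcard1]
      exact (Fintype.card_congr (Equiv.ofInjective par hparinj)).symm
    have hle : Fintype.card Q.V - 1 ≤ Fintype.card Q.A := by
      rw [← hcard1]
      exact Fintype.card_le_of_injective par hparinj
    have hcardC : Fintype.card {a : Q.A // a ∉ T} = cQ Q := by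
      have h1 := Fintype.card_subtype_compl (fun a : Q.A => a ∈ T)
      rw [hcardT] at h1
      have h3 : cQ Q = Fintype.card Q.A + 1 - Fintype.card Q.V := rfl
      omega
    set eC : {a : Q.A // a ∉ T} ≃ Fin (cQ Q) := Fintype.equivFinOfCardEq hcardC with heC
    set ext0 : (Fin (cQ Q) → kˣ) → (Q.A → kˣ) :=
      fun g a => if h : a ∈ T then 1 else g (eC ⟨a, h⟩) with hext0
    have ext0_mul : ∀ g g', ext0 (g * g') = ext0 g * ext0 g' := by
      intro g g'
      funext a
      show (if h : a ∈ T then 1 else (g * g') (eC ⟨a, h⟩)) = _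
      by_cases h : a ∈ T
      · show _ = (if h : a ∈ T then 1 else g (eC ⟨a, h⟩))
          * (if h : a ∈ T then 1 else g' (eC ⟨a, h⟩))
        rw [dif_pos h, dif_pos h, dif_pos h, mul_one]
      · show _ = (if h : a ∈ T then 1 else g (eC ⟨a, h⟩))
          * (if h : a ∈ T then 1 else g' (eC ⟨a, h⟩))
        rw [dif_neg h, dif_neg h, dif_neg h]
        rfl
    set extHom : (Fin (cQ Q) → kˣ) →* (Q.A → kˣ) := MonoidHom.mk' ext0 ext0_mul with hextHom
    set N : Subgroup ↥(theta pp).range :=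
      (Subgroup.map (theta pp) (dh Q kˣ).range).subgroupOf (theta pp).range with hN
    set ρ : (Fin (cQ Q) → kˣ) →* (↥(theta pp).range ⧸ N) :=
      (QuotientGroup.mk' N).comp ((theta pp).rangeRestrict.comp extHom) with hρ
    have hρapp : ∀ g, ρ g = QuotientGroup.mk ((theta pp).rangeRestrict (ext0 g)) := fun g => rfl
    have hρinj : Function.Injective ρ := by
      rw [injective_iff_map_eq_one]
      intro g hg
      rw [hρapp] at hg
      have h1 := (QuotientGroup.eq_one_iff _).mp hg
      rw [Subgroup.mem_subgroupOf] at h1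
      obtain ⟨u, hu1, hu2⟩ := Subgroup.mem_map.mp h1
      obtain ⟨c, rfl⟩ := MonoidHom.mem_range.mp hu1
      have hceq : dh Q kˣ c = ext0 g := hinj hu2
      have htree : ∀ v : {v : Q.V // v ≠ v0},
          c (Q.src (par v)) * (c (Q.tgt (par v)))⁻¹ = 1 := by
        intro v
        have h2 := congrFun hceq (par v)
        rw [show ext0 g (par v) = 1 from dif_pos ⟨v, rfl⟩] at h2
        exact h2
      have hconst := sol_ker Q v0 par ht hp c htree
      have hdh1 : dh Q kˣ c = 1 := by
        funext a
        show c (Q.src a) * (c (Q.tgt a))⁻¹ = 1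
        rw [hconst (Q.src a), hconst (Q.tgt a), mul_inv_cancel]
      funext j
      have h2 : ext0 g ((eC.symm j).1) = g j := by
        show (if h : (eC.symm j).1 ∈ T then 1 else g (eC ⟨(eC.symm j).1, h⟩)) = g j
        rw [dif_neg (eC.symm j).2]
        congr 1
        exact (congrArg eC (Subtype.ext rfl)).trans (Equiv.apply_symm_apply eC j)
      have h3 := congrFun hceq ((eC.symm j).1)
      rw [hdh1, Pi.one_apply, h2] at h3
      exact h3.symm
    have hρsurj : Function.Surjective ρ := by
      intro q
      obtain ⟨x, rfl⟩ := QuotientGroup.mk_surjective q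
      obtain ⟨f, hf⟩ := x
      obtain ⟨w, rfl⟩ := MonoidHom.mem_range.mp hf
      set c := sol Q v0 par ht hp w with hcdef
      have hspec : ∀ v : {v : Q.V // v ≠ v0}, dh Q kˣ c (par v) = w (par v) :=
        fun v => sol_spec Q v0 par ht hp w v
      set w' := w * (dh Q kˣ c)⁻¹ with hw'
      have hw'T : ∀ a, a ∈ T → w' a = 1 := by
        rintro a ⟨v, rfl⟩
        show w (par v) * (dh Q kˣ c (par v))⁻¹ = 1
        rw [hspec v, mul_inv_cancel]
      refine ⟨fun j => w' ((eC.symm j).1), ?_⟩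
      have hext : ext0 (fun j => w' ((eC.symm j).1)) = w' := by
        funext a
        show (if h : a ∈ T then 1 else w' ((eC.symm (eC ⟨a, h⟩)).1)) = w' a
        by_cases h : a ∈ T
        · rw [dif_pos h, hw'T a h]
        · rw [dif_neg h, Equiv.symm_apply_apply]
      rw [hρapp, QuotientGroup.eq, Subgroup.mem_subgroupOf]
      apply Subgroup.mem_map.mpr
      refine ⟨dh Q kˣ c, MonoidHom.mem_range.mpr ⟨c, rfl⟩, ?_⟩
      show theta pp (dh Q kˣ c) = (theta pp (ext0 (fun j => w' ((eC.symm j).1))))⁻¹ * theta pp w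
      rw [hext, ← map_inv, ← map_mul]
      congr 1
      rw [hw', mul_inv_rev, inv_inv, inv_mul_cancel_right]
    exact ⟨(MulEquiv.ofBijective ρ ⟨hρinj, hρsurj⟩).symm⟩

end GentlePaper
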